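/- arXiv:1709.01457 — 2 statements merged into one kernel-verified Lean document; each statement's English description precedes it below -/
import Mathlib

section
/- Let n ≥ 1, 1 < p < ∞, α > 0. For every j ∈ ℕ let a_j, b_j : ℂⁿ → [0,1] be measurable, and assume there are N, M ∈ ℕ such that each z ∈ ℂⁿ belongs to at most N of the sets supp(a_j) and to at most M of the sets supp(b_j). If A is a bounded operator on L_α^p, then for every f ∈ L_α^p the series ∑_{j=1}^∞ M_{a_j} A M_{b_j} f converges in L_α^p (i.e. the partial sums of ∑_j M_{a_j} A M_{b_j} converge strongly), and the resulting bounded operator satisfies ‖∑_{j=1}^∞ M_{a_j} A M_{b_j}‖ ≤ N M ‖A‖. -/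
open MeasureTheory Complex Filter Metric

noncomputable section

set_option synthInstance.maxHeartbeats 1000000
set_option maxHeartbeats 1000000

/-- ℂⁿ with its Euclidean (Hermitian) norm. -/
abbrev Cn (n : ℕ) := EuclideanSpace ℂ (Fin n)

instance (n : ℕ) : MeasurableSpace (Cn n) := MeasurableSpace.comap WithLp.ofLp MeasurableSpace.pi
instance (n : ℕ) : MeasureSpace (Cn n) :=
  ⟨Measure.map (WithLp.toLp 2) (Measure.pi fun _ => (volume : Measure ℂ))⟩

/-- The standard Hermitian inner product ⟨z,w⟩ on ℂⁿ, linear in the first argument and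
antilinear in the second. -/
def herm {n : ℕ} (z w : Cn n) : ℂ := inner ℂ w z

/-- The Gaussian measure dμ_ν(z) = (ν/π)ⁿ e^{−ν|z|²} dz on ℂⁿ. -/
def gaussMeasure (n : ℕ) (ν : ℝ) : Measure (Cn n) :=
  volume.withDensity fun z => ENNReal.ofReal ((ν / Real.pi) ^ n * Real.exp (-ν * ‖z‖ ^ 2))

/-- L_α^p = L^p(ℂⁿ, μ_{pα/2}). -/
abbrev Lpa (n : ℕ) (p α : ℝ) := Lp ℂ (ENNReal.ofReal p) (gaussMeasure n (p * α / 2))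

/-- `M` is the operator of multiplication by `g` on `L_α^p`. -/
def IsMulOp (n : ℕ) (p α : ℝ) [Fact (1 ≤ ENNReal.ofReal p)] (g : Cn n → ℂ)
    (M : Lpa n p α →L[ℂ] Lpa n p α) : Prop :=
  ∀ f : Lpa n p α, ⇑(M f) =ᵐ[gaussMeasure n (p * α / 2)] fun z => g z * f z

open scoped ENNReal NNReal Topology

/-- Power mean inequality in `ℝ≥0∞`. -/
lemma aux_pm {ι : Type*} (s : Finset ι) (x : ι → ℝ≥0∞) {p : ℝ} (hp : 1 ≤ p) :
    (∑ i ∈ s, x i) ^ p ≤ (s.card : ℝ≥0∞) ^ (p - 1) * ∑ i ∈ s, x i ^ p := by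
  rcases s.eq_empty_or_nonempty with rfl | hs
  · simp [ENNReal.zero_rpow_of_pos (by linarith : (0:ℝ) < p)]
  · set c : ℝ≥0∞ := (s.card : ℝ≥0∞) with hc
    have hc0 : c ≠ 0 := by
      simp [hc, Finset.card_eq_zero, hs.ne_empty]
    have hct : c ≠ ⊤ := by simp [hc]
    have hw : ∑ _i ∈ s, c⁻¹ = 1 := by
      rw [Finset.sum_const, nsmul_eq_mul, ← hc, ENNReal.mul_inv_cancel hc0 hct]
    have key := ENNReal.rpow_arith_mean_le_arith_mean_rpow s (fun _ => c⁻¹) x hw hp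
    have h1 : (∑ i ∈ s, c⁻¹ * x i) = c⁻¹ * ∑ i ∈ s, x i := by rw [Finset.mul_sum]
    have h2 : (∑ i ∈ s, c⁻¹ * x i ^ p) = c⁻¹ * ∑ i ∈ s, x i ^ p := by rw [Finset.mul_sum]
    rw [h1, h2, ENNReal.mul_rpow_of_nonneg _ _ (by linarith : (0:ℝ) ≤ p)] at key
    have hinv : c ^ p * c⁻¹ ^ p = 1 := by
      rw [← ENNReal.mul_rpow_of_nonneg _ _ (by linarith : (0:ℝ) ≤ p),
        ENNReal.mul_inv_cancel hc0 hct, ENNReal.one_rpow]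
    have hsplit : c ^ (p - 1) * c = c ^ p := by
      have hpe : p = p - 1 + 1 := by ring
      rw [hpe, ENNReal.rpow_add _ _ hc0 hct, ENNReal.rpow_one]
      rw [← hpe]
    calc (∑ i ∈ s, x i) ^ p = c ^ p * c⁻¹ ^ p * (∑ i ∈ s, x i) ^ p := by rw [hinv, one_mul]
      _ = c ^ p * (c⁻¹ ^ p * (∑ i ∈ s, x i) ^ p) := by ring
      _ ≤ c ^ p * (c⁻¹ * ∑ i ∈ s, x i ^ p) := mul_le_mul_right key _
      _ = (c ^ p * c⁻¹) * ∑ i ∈ s, x i ^ p := by ring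
      _ = c ^ (p - 1) * ∑ i ∈ s, x i ^ p := by
          have hx : c * (c⁻¹ * ∑ i ∈ s, x i ^ p) = ∑ i ∈ s, x i ^ p := by
            rw [← mul_assoc, ENNReal.mul_inv_cancel hc0 hct, one_mul]
          rw [← hsplit, mul_assoc, mul_assoc, hx]


/-- Cardinality bound from `encard` bound. -/
lemma aux_card {c : ℕ → ℝ} {N : ℕ} (hN : ({j | c j ≠ 0} : Set ℕ).encard ≤ N)
    (S : Finset ℕ) (hS : ∀ j ∈ S, c j ≠ 0) : (S.card : ℝ≥0∞) ≤ N := by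
  have h1 : (↑S : Set ℕ) ⊆ {j | c j ≠ 0} := fun j hj => hS j hj
  have h2 : (↑S : Set ℕ).encard ≤ (N : ℕ∞) := le_trans (Set.encard_mono h1) hN
  rw [Set.encard_coe_eq_coe_finsetCard] at h2
  have h3 : S.card ≤ N := by exact_mod_cast h2
  exact_mod_cast Nat.cast_le.2 h3

/-- Pointwise bound for the `a`-side. -/
lemma aux_pt {p : ℝ} (hp : 1 ≤ p) (N : ℕ) (c : ℕ → ℝ)
    (hc : ∀ j, c j ∈ Set.Icc (0:ℝ) 1) (hN : ({j | c j ≠ 0} : Set ℕ).encard ≤ N)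
    (F : Finset ℕ) (w : ℕ → ℂ) :
    (‖∑ j ∈ F, (c j : ℂ) * w j‖₊ : ℝ≥0∞) ^ p
      ≤ (N : ℝ≥0∞) ^ (p - 1) * ∑ j ∈ F, (‖w j‖₊ : ℝ≥0∞) ^ p := by
  classical
  set S : Finset ℕ := F.filter (fun j => c j ≠ 0) with hSdef
  have hsum : ∑ j ∈ F, (c j : ℂ) * w j = ∑ j ∈ S, (c j : ℂ) * w j := by
    refine (Finset.sum_filter_of_ne ?_).symm
    intro j _ h hc0
    exact h (by rw [hc0]; simp)
  have hterm : ∀ j, (‖(c j : ℂ) * w j‖₊ : ℝ≥0∞) ≤ (‖w j‖₊ : ℝ≥0∞) := by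
    intro j
    have : ‖(c j : ℂ) * w j‖ ≤ ‖w j‖ := by
      rw [norm_mul, Complex.norm_real, Real.norm_eq_abs,
        _root_.abs_of_nonneg (hc j).1]
      nlinarith [norm_nonneg (w j), (hc j).1, (hc j).2]
    exact_mod_cast ENNReal.coe_le_coe.2 (by exact_mod_cast this)
  have htri : (‖∑ j ∈ S, (c j : ℂ) * w j‖₊ : ℝ≥0∞) ≤ ∑ j ∈ S, (‖w j‖₊ : ℝ≥0∞) := by
    calc (‖∑ j ∈ S, (c j : ℂ) * w j‖₊ : ℝ≥0∞)
        ≤ ∑ j ∈ S, (‖(c j : ℂ) * w j‖₊ : ℝ≥0∞) := by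
          rw [← ENNReal.coe_finset_sum]
          exact ENNReal.coe_le_coe.2 (nnnorm_sum_le S _)
      _ ≤ ∑ j ∈ S, (‖w j‖₊ : ℝ≥0∞) := Finset.sum_le_sum fun j _ => hterm j
  calc (‖∑ j ∈ F, (c j : ℂ) * w j‖₊ : ℝ≥0∞) ^ p
      ≤ (∑ j ∈ S, (‖w j‖₊ : ℝ≥0∞)) ^ p := by
        rw [hsum]; exact ENNReal.rpow_le_rpow htri (by linarith)
    _ ≤ (S.card : ℝ≥0∞) ^ (p - 1) * ∑ j ∈ S, (‖w j‖₊ : ℝ≥0∞) ^ p := aux_pm S _ hp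
    _ ≤ (N : ℝ≥0∞) ^ (p - 1) * ∑ j ∈ F, (‖w j‖₊ : ℝ≥0∞) ^ p := by
        refine mul_le_mul' (ENNReal.rpow_le_rpow ?_ (by linarith)) ?_
        · exact aux_card hN S (fun j hj => (Finset.mem_filter.1 hj).2)
        · exact Finset.sum_le_sum_of_subset (Finset.filter_subset _ _)

/-- Pointwise bound for the `b`-side. -/
lemma aux_ptb {p : ℝ} (hp : 1 ≤ p) (M : ℕ) (c : ℕ → ℝ)
    (hc : ∀ j, c j ∈ Set.Icc (0:ℝ) 1) (hM : ({j | c j ≠ 0} : Set ℕ).encard ≤ M)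
    (F : Finset ℕ) :
    ∑ j ∈ F, (ENNReal.ofReal (c j)) ^ p ≤ (M : ℝ≥0∞) := by
  classical
  set S : Finset ℕ := F.filter (fun j => c j ≠ 0) with hSdef
  have hsum : ∑ j ∈ F, (ENNReal.ofReal (c j)) ^ p = ∑ j ∈ S, (ENNReal.ofReal (c j)) ^ p := by
    refine (Finset.sum_filter_of_ne ?_).symm
    intro j _ h hc0
    exact h (by rw [hc0]; simp [ENNReal.zero_rpow_of_pos (by linarith : (0:ℝ) < p)])
  rw [hsum]
  calc ∑ j ∈ S, (ENNReal.ofReal (c j)) ^ p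
      ≤ ∑ _j ∈ S, (1 : ℝ≥0∞) := by
        refine Finset.sum_le_sum fun j _ => ?_
        exact ENNReal.rpow_le_one (ENNReal.ofReal_le_one.2 (hc j).2) (by linarith)
    _ = (S.card : ℝ≥0∞) := by simp
    _ ≤ (M : ℝ≥0∞) := aux_card hM S (fun j hj => (Finset.mem_filter.1 hj).2)


lemma aux_coeFn_sum {X : Type*} [MeasurableSpace X] {μ : Measure X} {q : ℝ≥0∞}
    [Fact (1 ≤ q)] (F : Finset ℕ) (g : ℕ → Lp ℂ q μ) :
    ⇑(∑ j ∈ F, g j) =ᵐ[μ] fun z => ∑ j ∈ F, g j z := by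
  classical
  induction F using Finset.induction_on with
  | empty => simp; exact Lp.coeFn_zero ℂ q μ
  | @insert i s hi ih =>
    rw [Finset.sum_insert hi]
    filter_upwards [Lp.coeFn_add (g i) (∑ j ∈ s, g j), ih] with z h1 h2
    simp only [Finset.sum_insert hi, h1, Pi.add_apply, h2]


/-- If each z belongs to at most N of the sets supp(a_j) and at most M of the
sets supp(b_j) (a_j, b_j measurable with values in [0,1]), and A is a bounded operator on
L_α^p, then the series ∑_j M_{a_j} A M_{b_j} converges strongly and the resulting operator
has norm at most N·M·‖A‖. -/
theorem statement5 (n : ℕ) (hn : 1 ≤ n) (p α : ℝ) (hp : 1 < p) (hα : 0 < α)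
    [Fact (1 ≤ ENNReal.ofReal p)]
    (N M : ℕ) (a b : ℕ → Cn n → ℝ)
    (ham : ∀ j, Measurable (a j)) (hbm : ∀ j, Measurable (b j))
    (ha01 : ∀ j z, a j z ∈ Set.Icc (0 : ℝ) 1) (hb01 : ∀ j z, b j z ∈ Set.Icc (0 : ℝ) 1)
    (haN : ∀ z : Cn n, ({j | z ∈ Function.support (a j)} : Set ℕ).encard ≤ N)
    (hbM : ∀ z : Cn n, ({j | z ∈ Function.support (b j)} : Set ℕ).encard ≤ M)
    (A : Lpa n p α →L[ℂ] Lpa n p α)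
    (Ma Mb : ℕ → Lpa n p α →L[ℂ] Lpa n p α)
    (hMa : ∀ j, IsMulOp n p α (fun z => ((a j z : ℝ) : ℂ)) (Ma j))
    (hMb : ∀ j, IsMulOp n p α (fun z => ((b j z : ℝ) : ℂ)) (Mb j)) :
    ∃ T : Lpa n p α →L[ℂ] Lpa n p α,
      (∀ f : Lpa n p α,
        Tendsto (fun m => ∑ j ∈ Finset.range m, (Ma j) (A ((Mb j) f))) atTop (nhds (T f))) ∧
      ‖T‖ ≤ (N : ℝ) * M * ‖A‖ := by
  classical
  have hp0 : (0:ℝ) < p := by linarith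
  have hp1 : (1:ℝ) ≤ p := le_of_lt hp
  set μ : Measure (Cn n) := gaussMeasure n (p * α / 2) with hμdef
  set q : ℝ≥0∞ := ENNReal.ofReal p with hqdef
  have hq0 : q ≠ 0 := by
    rw [hqdef, Ne, ENNReal.ofReal_eq_zero]
    linarith
  have hqt : q ≠ ⊤ := by rw [hqdef]; exact ENNReal.ofReal_ne_top
  have hqp : q.toReal = p := by rw [hqdef]; exact ENNReal.toReal_ofReal hp0.le
  set J : Lpa n p α → ℝ≥0∞ := fun h => ∫⁻ z, (‖h z‖₊ : ℝ≥0∞) ^ p ∂μ with hJdef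
  have heJ : ∀ h : Lpa n p α, eLpNorm (⇑h) q μ = (J h) ^ (1/p) := by
    intro h
    rw [eLpNorm_eq_lintegral_rpow_enorm_toReal hq0 hqt, hqp]; rfl
  have hJe : ∀ h : Lpa n p α, J h = (eLpNorm (⇑h) q μ) ^ p := by
    intro h
    rw [heJ h, ← ENNReal.rpow_mul, one_div, inv_mul_cancel₀ hp0.ne', ENNReal.rpow_one]
  have hJt : ∀ h : Lpa n p α, J h ≠ ⊤ := by
    intro h
    rw [hJe h]
    exact (ENNReal.rpow_lt_top_of_nonneg hp0.le (Lp.eLpNorm_ne_top h)).ne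
  have hofReal : ∀ h : Lpa n p α, ENNReal.ofReal ‖h‖ = eLpNorm (⇑h) q μ := by
    intro h
    rw [Lp.norm_def, ENNReal.ofReal_toReal (Lp.eLpNorm_ne_top h)]
  -- b-side estimate
  have key_b : ∀ (F : Finset ℕ) (f : Lpa n p α),
      ∑ j ∈ F, J (Mb j f) ≤ (M : ℝ≥0∞) * J f := by
    intro F f
    have hmeasf : AEMeasurable (fun z => (‖f z‖₊ : ℝ≥0∞) ^ p) μ :=
      ((Lp.aestronglyMeasurable f).enorm).pow_const p
    have hJb : ∀ j : ℕ, J (Mb j f)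
        = ∫⁻ z, (ENNReal.ofReal (b j z)) ^ p * (‖f z‖₊ : ℝ≥0∞) ^ p ∂μ := by
      intro j
      simp only [hJdef]
      refine lintegral_congr_ae ?_
      filter_upwards [hMb j f] with z hz
      have hb' : (‖((b j z : ℝ) : ℂ)‖₊ : ℝ≥0∞) = ENNReal.ofReal (b j z) := by
        rw [Complex.nnnorm_real, ← enorm_eq_nnnorm, ← ofReal_norm, Real.norm_eq_abs,
          _root_.abs_of_nonneg (hb01 j z).1]
      rw [hz]
      rw [nnnorm_mul, ENNReal.coe_mul, hb', ENNReal.mul_rpow_of_nonneg _ _ hp0.le]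
    have hmeas : ∀ j ∈ F, AEMeasurable
        (fun z => (ENNReal.ofReal (b j z)) ^ p * (‖f z‖₊ : ℝ≥0∞) ^ p) μ := by
      intro j _
      exact (((ENNReal.measurable_ofReal.comp (hbm j)).pow_const p).aemeasurable).mul hmeasf
    calc ∑ j ∈ F, J (Mb j f)
        = ∑ j ∈ F, ∫⁻ z, (ENNReal.ofReal (b j z)) ^ p * (‖f z‖₊ : ℝ≥0∞) ^ p ∂μ :=
          Finset.sum_congr rfl fun j _ => hJb j
      _ = ∫⁻ z, ∑ j ∈ F, (ENNReal.ofReal (b j z)) ^ p * (‖f z‖₊ : ℝ≥0∞) ^ p ∂μ :=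
          (lintegral_finset_sum' F hmeas).symm
      _ ≤ ∫⁻ z, (M : ℝ≥0∞) * (‖f z‖₊ : ℝ≥0∞) ^ p ∂μ := by
          refine lintegral_mono fun z => ?_
          rw [← Finset.sum_mul]
          refine mul_le_mul' ?_ le_rfl
          refine aux_ptb hp1 M (fun j => b j z) (fun j => hb01 j z) ?_ F
          exact hbM z
      _ = (M : ℝ≥0∞) * J f := by
          rw [lintegral_const_mul' _ _ (ENNReal.natCast_ne_top M)]
  -- a-side estimate
  have key_a : ∀ (F : Finset ℕ) (g : ℕ → Lpa n p α),
      J (∑ j ∈ F, Ma j (g j)) ≤ (N : ℝ≥0∞) ^ (p - 1) * ∑ j ∈ F, J (g j) := by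
    intro F g
    have h1 : ⇑(∑ j ∈ F, Ma j (g j)) =ᵐ[μ] fun z => ∑ j ∈ F, (a j z : ℂ) * g j z := by
      have h2 := aux_coeFn_sum (μ := μ) (q := q) F (fun j => Ma j (g j))
      have h3 : ∀ᵐ z ∂μ, ∀ j : ℕ, (Ma j (g j)) z = (a j z : ℂ) * g j z :=
        ae_all_iff.2 fun j => hMa j (g j)
      filter_upwards [h2, h3] with z hz1 hz2
      rw [hz1]
      exact Finset.sum_congr rfl fun j _ => hz2 j
    have hJeq : J (∑ j ∈ F, Ma j (g j))
        = ∫⁻ z, (‖∑ j ∈ F, (a j z : ℂ) * g j z‖₊ : ℝ≥0∞) ^ p ∂μ := by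
      simp only [hJdef]
      refine lintegral_congr_ae ?_
      filter_upwards [h1] with z hz
      rw [hz]
    rw [hJeq]
    calc ∫⁻ z, (‖∑ j ∈ F, (a j z : ℂ) * g j z‖₊ : ℝ≥0∞) ^ p ∂μ
        ≤ ∫⁻ z, (N : ℝ≥0∞) ^ (p - 1) * ∑ j ∈ F, (‖g j z‖₊ : ℝ≥0∞) ^ p ∂μ := by
          refine lintegral_mono fun z => ?_
          refine aux_pt hp1 N (fun j => a j z) (fun j => ha01 j z) ?_ F (fun j => g j z)
          exact haN z
      _ = (N : ℝ≥0∞) ^ (p - 1) * ∫⁻ z, ∑ j ∈ F, (‖g j z‖₊ : ℝ≥0∞) ^ p ∂μ :=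
          lintegral_const_mul' _ _
            (ENNReal.rpow_ne_top_of_nonneg (by linarith) (ENNReal.natCast_ne_top N))
      _ = (N : ℝ≥0∞) ^ (p - 1) * ∑ j ∈ F, J (g j) := by
          rw [lintegral_finset_sum' F (f := fun j z => (‖g j z‖₊ : ℝ≥0∞) ^ p)
            (fun j _ => ((Lp.aestronglyMeasurable (g j)).enorm).pow_const p)]
  -- operator norm of A in ENNReal form
  have hJA : ∀ g : Lpa n p α, J (A g) ≤ (ENNReal.ofReal ‖A‖) ^ p * J g := by
    intro g
    rw [hJe (A g), hJe g, ← ENNReal.mul_rpow_of_nonneg _ _ hp0.le]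
    refine ENNReal.rpow_le_rpow ?_ hp0.le
    rw [← hofReal (A g), ← hofReal g, ← ENNReal.ofReal_mul (norm_nonneg A)]
    exact ENNReal.ofReal_le_ofReal (A.le_opNorm g)
  set C : ℝ≥0∞ := (N : ℝ≥0∞) ^ (p - 1) * (ENNReal.ofReal ‖A‖) ^ p with hCdef
  have hCt : C ≠ ⊤ := by
    rw [hCdef]
    exact ENNReal.mul_ne_top
      (ENNReal.rpow_ne_top_of_nonneg (by linarith) (ENNReal.natCast_ne_top N))
      (ENNReal.rpow_ne_top_of_nonneg hp0.le ENNReal.ofReal_ne_top)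
  have key : ∀ (F : Finset ℕ) (f : Lpa n p α),
      J (∑ j ∈ F, Ma j (A (Mb j f))) ≤ C * ∑ j ∈ F, J (Mb j f) := by
    intro F f
    calc J (∑ j ∈ F, Ma j (A (Mb j f)))
        ≤ (N : ℝ≥0∞) ^ (p - 1) * ∑ j ∈ F, J (A (Mb j f)) := key_a F _
      _ ≤ (N : ℝ≥0∞) ^ (p - 1) * ∑ j ∈ F, (ENNReal.ofReal ‖A‖) ^ p * J (Mb j f) :=
          mul_le_mul' le_rfl (Finset.sum_le_sum fun j _ => hJA _)
      _ = C * ∑ j ∈ F, J (Mb j f) := by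
          rw [← Finset.mul_sum, ← mul_assoc, hCdef]
  -- uniform norm bound for finite partial sums
  have hKc : ∀ (F : Finset ℕ) (f : Lpa n p α),
      ‖∑ j ∈ F, Ma j (A (Mb j f))‖ ≤ (N : ℝ) * M * ‖A‖ * ‖f‖ := by
    intro F f
    set cc : ℝ≥0∞ := (N : ℝ≥0∞) * (M : ℝ≥0∞) * ENNReal.ofReal ‖A‖ with hccdef
    have hcct : cc ≠ ⊤ := by
      rw [hccdef]
      exact ENNReal.mul_ne_top
        (ENNReal.mul_ne_top (ENNReal.natCast_ne_top N) (ENNReal.natCast_ne_top M))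
        ENNReal.ofReal_ne_top
    have hNp : (N : ℝ≥0∞) ^ (p - 1) ≤ (N : ℝ≥0∞) ^ p := by
      rcases Nat.eq_zero_or_pos N with h0 | h0
      · subst h0
        rw [Nat.cast_zero, ENNReal.zero_rpow_of_pos (by linarith : (0:ℝ) < p - 1)]
        exact zero_le
      · exact ENNReal.rpow_le_rpow_of_exponent_le (by exact_mod_cast Nat.one_le_cast.2 h0)
          (by linarith)
    have hMp : (M : ℝ≥0∞) ≤ (M : ℝ≥0∞) ^ p := by
      rcases Nat.eq_zero_or_pos M with h0 | h0
      · subst h0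
        rw [Nat.cast_zero, ENNReal.zero_rpow_of_pos hp0]
      · calc (M : ℝ≥0∞) = (M : ℝ≥0∞) ^ (1:ℝ) := (ENNReal.rpow_one _).symm
          _ ≤ (M : ℝ≥0∞) ^ p := ENNReal.rpow_le_rpow_of_exponent_le
              (by exact_mod_cast Nat.one_le_cast.2 h0) hp1
    have hccp : cc ^ p = (N : ℝ≥0∞) ^ p * (M : ℝ≥0∞) ^ p * (ENNReal.ofReal ‖A‖) ^ p := by
      rw [hccdef, ENNReal.mul_rpow_of_nonneg _ _ hp0.le, ENNReal.mul_rpow_of_nonneg _ _ hp0.le]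
    have hJle : J (∑ j ∈ F, Ma j (A (Mb j f))) ≤ cc ^ p * J f := by
      refine le_trans (key F f) (le_trans (mul_le_mul' le_rfl (key_b F f)) ?_)
      rw [hccp]
      calc C * ((M : ℝ≥0∞) * J f)
          = (N : ℝ≥0∞) ^ (p - 1) * (M : ℝ≥0∞) * (ENNReal.ofReal ‖A‖) ^ p * J f := by
            rw [hCdef]; ring
        _ ≤ (N : ℝ≥0∞) ^ p * (M : ℝ≥0∞) ^ p * (ENNReal.ofReal ‖A‖) ^ p * J f :=
            mul_le_mul' (mul_le_mul' (mul_le_mul' hNp hMp) le_rfl) le_rfl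
    have henorm : eLpNorm (⇑(∑ j ∈ F, Ma j (A (Mb j f)))) q μ ≤ cc * eLpNorm (⇑f) q μ := by
      rw [heJ]
      refine le_trans (ENNReal.rpow_le_rpow hJle (by positivity)) ?_
      rw [ENNReal.mul_rpow_of_nonneg _ _ (by positivity : (0:ℝ) ≤ 1/p),
        ← ENNReal.rpow_mul, mul_one_div, div_self hp0.ne', ENNReal.rpow_one, ← heJ f]
    have hfin : cc * eLpNorm (⇑f) q μ ≠ ⊤ :=
      ENNReal.mul_ne_top hcct (Lp.eLpNorm_ne_top f)
    calc ‖∑ j ∈ F, Ma j (A (Mb j f))‖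
        = (eLpNorm (⇑(∑ j ∈ F, Ma j (A (Mb j f)))) q μ).toReal := Lp.norm_def _
      _ ≤ (cc * eLpNorm (⇑f) q μ).toReal := ENNReal.toReal_mono hfin henorm
      _ = (N : ℝ) * M * ‖A‖ * ‖f‖ := by
          rw [ENNReal.toReal_mul, hccdef, ENNReal.toReal_mul, ENNReal.toReal_mul,
            ENNReal.toReal_natCast, ENNReal.toReal_natCast,
            ENNReal.toReal_ofReal (norm_nonneg _), ← Lp.norm_def]
  -- convergence of partial sums for each f
  have hconv : ∀ f : Lpa n p α, ∃ L : Lpa n p α,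
      Tendsto (fun m => ∑ j ∈ Finset.range m, (Ma j) (A ((Mb j) f))) atTop (𝓝 L) := by
    intro f
    have hut : ∑' j, J (Mb j f) ≠ ⊤ := by
      have h1 : ∑' j, J (Mb j f) ≤ (M : ℝ≥0∞) * J f := by
        rw [ENNReal.tsum_eq_iSup_sum]
        exact iSup_le fun F => key_b F f
      exact ne_top_of_le_ne_top
        (ENNReal.mul_ne_top (ENNReal.natCast_ne_top M) (hJt f)) h1
    have htail : Tendsto (fun m => ∑' k, J (Mb (k + m) f)) atTop (𝓝 0) :=
      ENNReal.tendsto_sum_nat_add (fun j => J (Mb j f)) hut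
    have htailt : ∀ m : ℕ, ∑' k, J (Mb (k + m) f) ≠ ⊤ := by
      intro m
      refine ne_top_of_le_ne_top hut ?_
      exact ENNReal.tsum_comp_le_tsum_of_injective (add_left_injective m) (fun j => J (Mb j f))
    have hDt : ∀ m : ℕ, C * ∑' k, J (Mb (k + m) f) ≠ ⊤ := fun m =>
      ENNReal.mul_ne_top hCt (htailt m)
    have hdist : ∀ (m₀ m m' : ℕ), m₀ ≤ m → m ≤ m' →
        ‖(∑ j ∈ Finset.range m', Ma j (A (Mb j f))) - ∑ j ∈ Finset.range m, Ma j (A (Mb j f))‖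
          ≤ ((C * ∑' k, J (Mb (k + m₀) f)) ^ (1/p)).toReal := by
      intro m₀ m m' h0 h1
      have hIco : ∑ j ∈ Finset.Ico m m', Ma j (A (Mb j f))
          = (∑ j ∈ Finset.range m', Ma j (A (Mb j f)))
            - ∑ j ∈ Finset.range m, Ma j (A (Mb j f)) :=
        Finset.sum_Ico_eq_sub _ h1
      rw [← hIco]
      have hsum_le : ∑ j ∈ Finset.Ico m m', J (Mb j f) ≤ ∑' k, J (Mb (k + m₀) f) := by
        calc ∑ j ∈ Finset.Ico m m', J (Mb j f)
            ≤ ∑ j ∈ Finset.Ico m₀ m', J (Mb j f) :=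
              Finset.sum_le_sum_of_subset (Finset.Ico_subset_Ico h0 le_rfl)
          _ = ∑ k ∈ Finset.range (m' - m₀), J (Mb (m₀ + k) f) := Finset.sum_Ico_eq_sum_range _ _ _
          _ = ∑ k ∈ Finset.range (m' - m₀), J (Mb (k + m₀) f) :=
              Finset.sum_congr rfl fun k _ => by rw [add_comm]
          _ ≤ ∑' k, J (Mb (k + m₀) f) := ENNReal.sum_le_tsum _
      have hJd : J (∑ j ∈ Finset.Ico m m', Ma j (A (Mb j f))) ≤ C * ∑' k, J (Mb (k + m₀) f) :=
        le_trans (key (Finset.Ico m m') f) (mul_le_mul' le_rfl hsum_le)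
      have he : eLpNorm (⇑(∑ j ∈ Finset.Ico m m', Ma j (A (Mb j f)))) q μ
          ≤ (C * ∑' k, J (Mb (k + m₀) f)) ^ (1/p) := by
        rw [heJ]
        exact ENNReal.rpow_le_rpow hJd (by positivity)
      calc ‖∑ j ∈ Finset.Ico m m', Ma j (A (Mb j f))‖
          = (eLpNorm (⇑(∑ j ∈ Finset.Ico m m', Ma j (A (Mb j f)))) q μ).toReal := Lp.norm_def _
        _ ≤ ((C * ∑' k, J (Mb (k + m₀) f)) ^ (1/p)).toReal :=
            ENNReal.toReal_mono
              (ENNReal.rpow_ne_top_of_nonneg (by positivity) (hDt m₀)) he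
    have hb0 : Tendsto (fun m₀ => ((C * ∑' k, J (Mb (k + m₀) f)) ^ (1/p)).toReal)
        atTop (𝓝 0) := by
      have h1 : Tendsto (fun m => C * ∑' k, J (Mb (k + m) f)) atTop (𝓝 0) := by
        have h := ENNReal.Tendsto.const_mul htail (Or.inr hCt)
        simpa using h
      have h2 : Tendsto (fun m => (C * ∑' k, J (Mb (k + m) f)) ^ (1/p)) atTop (𝓝 0) := by
        have hc := (ENNReal.continuous_rpow_const (y := 1/p)).tendsto (0 : ℝ≥0∞)
        have h := hc.comp h1
        simpa [Function.comp_def, one_div,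
          ENNReal.zero_rpow_of_pos (show (0:ℝ) < p⁻¹ by positivity)] using h
      have h3 := (ENNReal.tendsto_toReal (show (0:ℝ≥0∞) ≠ ⊤ by simp)).comp h2
      simpa [Function.comp_def] using h3
    have hcauchy : CauchySeq (fun m => ∑ j ∈ Finset.range m, Ma j (A (Mb j f))) := by
      refine cauchySeq_of_le_tendsto_0 _ ?_ hb0
      intro m1 m2 m₀ h1 h2
      rcases le_total m2 m1 with h | h
      · rw [dist_eq_norm]
        exact hdist m₀ m2 m1 h2 h
      · rw [dist_comm, dist_eq_norm]
        exact hdist m₀ m1 m2 h1 h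
    exact cauchySeq_tendsto_of_complete hcauchy
  choose L hL using hconv
  have hadd : ∀ f g : Lpa n p α, L (f + g) = L f + L g := by
    intro f g
    have heq : (fun m => ∑ j ∈ Finset.range m, Ma j (A (Mb j (f + g))))
        = fun m => (∑ j ∈ Finset.range m, Ma j (A (Mb j f)))
          + ∑ j ∈ Finset.range m, Ma j (A (Mb j g)) := by
      funext m
      rw [← Finset.sum_add_distrib]
      exact Finset.sum_congr rfl fun j _ => by rw [map_add, map_add, map_add]
    have h1 := hL (f + g)
    rw [heq] at h1
    exact tendsto_nhds_unique h1 ((hL f).add (hL g))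
  have hsmul : ∀ (c : ℂ) (f : Lpa n p α), L (c • f) = c • L f := by
    intro c f
    have heq : (fun m => ∑ j ∈ Finset.range m, Ma j (A (Mb j (c • f))))
        = fun m => c • ∑ j ∈ Finset.range m, Ma j (A (Mb j f)) := by
      funext m
      rw [Finset.smul_sum]
      exact Finset.sum_congr rfl fun j _ => by rw [_root_.map_smul, _root_.map_smul, _root_.map_smul]
    have h1 := hL (c • f)
    rw [heq] at h1
    exact tendsto_nhds_unique h1 ((hL f).const_smul c)
  have hLb : ∀ f : Lpa n p α, ‖L f‖ ≤ (N : ℝ) * M * ‖A‖ * ‖f‖ := by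
    intro f
    refine le_of_tendsto (hL f).norm ?_
    exact Filter.Eventually.of_forall fun m => hKc (Finset.range m) f
  set T0 : Lpa n p α →ₗ[ℂ] Lpa n p α :=
    { toFun := L
      map_add' := hadd
      map_smul' := hsmul } with hT0def
  refine ⟨LinearMap.mkContinuous T0 ((N : ℝ) * M * ‖A‖) hLb, fun f => ?_, ?_⟩
  · exact hL f
  · exact LinearMap.mkContinuous_norm_le T0 (by positivity) hLb
end
end

section
/- Let n ≥ 1, 1 < p < ∞, α > 0. The projection P_α, viewed as a bounded operator on L_α^p, is band-dominated, i.e. P_α is the limit in operator norm of a sequence of band operators on L_α^p. -/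
open MeasureTheory Complex Filter Metric

noncomputable section

set_option synthInstance.maxHeartbeats 1000000
set_option maxHeartbeats 1000000

/-- `P` acts on `L_α^p` by the integral formula (P_α f)(z) = ∫ e^{α⟨z,w⟩} f(w) dμ_α(w). -/
def IsProjOp (n : ℕ) (p α : ℝ) [Fact (1 ≤ ENNReal.ofReal p)]
    (P : Lpa n p α →L[ℂ] Lpa n p α) : Prop :=
  ∀ f : Lpa n p α,
    ⇑(P f) =ᵐ[gaussMeasure n (p * α / 2)]
      fun z => ∫ w, Complex.exp ((α : ℂ) * herm z w) * f w ∂gaussMeasure n α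

/-- The distance between two subsets of a metric space (valued in [0,∞]). -/
def setDist {X : Type*} [PseudoEMetricSpace X] (s t : Set X) : ENNReal :=
  ⨅ (x ∈ s) (y ∈ t), edist x y

/-- A band operator on L_α^p : there is a band width ω > 0 such that M_f A M_g = 0 whenever
f, g ∈ L^∞(ℂⁿ) have dist(supp f, supp g) > ω. -/
def IsBandOp (n : ℕ) (p α : ℝ) [Fact (1 ≤ ENNReal.ofReal p)]
    (A : Lpa n p α →L[ℂ] Lpa n p α) : Prop :=
  ∃ ω : ℝ, 0 < ω ∧
    ∀ (f g : Cn n → ℂ), Measurable f → Measurable g →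
      (∃ C, ∀ z, ‖f z‖ ≤ C) → (∃ C, ∀ z, ‖g z‖ ≤ C) →
      ∀ (Mf Mg : Lpa n p α →L[ℂ] Lpa n p α),
        IsMulOp n p α f Mf → IsMulOp n p α g Mg →
        ENNReal.ofReal ω < setDist (Function.support f) (Function.support g) →
        Mf.comp (A.comp Mg) = 0

/-- A band-dominated operator on L_α^p : a norm limit of band operators. -/
def IsBDO (n : ℕ) (p α : ℝ) [Fact (1 ≤ ENNReal.ofReal p)]
    (A : Lpa n p α →L[ℂ] Lpa n p α) : Prop :=
  ∃ B : ℕ → Lpa n p α →L[ℂ] Lpa n p α,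
    (∀ k, IsBandOp n p α (B k)) ∧ Tendsto (fun k => ‖A - B k‖) atTop (nhds 0)

open scoped ENNReal

-- extra instances
instance (n : ℕ) : BorelSpace (Cn n) := PiLp.borelSpace 2 (X := fun _ : Fin n => ℂ)
theorem Cn_volume_preserving (n : ℕ) :
    MeasurePreserving (WithLp.toLp 2) (Measure.pi fun _ : Fin n => (volume : Measure ℂ))
      (volume : Measure (Cn n)) :=
  ⟨WithLp.measurable_toLp 2 _, rfl⟩
instance (n : ℕ) : SigmaFinite (volume : Measure (Cn n)) :=
  (MeasurableEquiv.toLp 2 (Fin n → ℂ)).sigmaFinite_map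
    (μ := Measure.pi fun _ : Fin n => (volume : Measure ℂ))
instance (n : ℕ) : (volume : Measure (Cn n)).IsAddRightInvariant := by
  constructor
  intro g
  show Measure.map (· + g) (Measure.map (WithLp.toLp 2)
      (Measure.pi fun _ : Fin n => (volume : Measure ℂ)))
    = Measure.map (WithLp.toLp 2) (Measure.pi fun _ : Fin n => (volume : Measure ℂ))
  rw [Measure.map_map (measurable_add_const g) (WithLp.measurable_toLp 2 _)]
  have : ((· + g) ∘ WithLp.toLp 2 : (Fin n → ℂ) → Cn n)
      = WithLp.toLp 2 ∘ (· + WithLp.ofLp g) := by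
    funext x; rfl
  rw [this, ← Measure.map_map (WithLp.measurable_toLp 2 _) (measurable_add_const _),
    MeasureTheory.map_add_right_eq_self]

namespace S9

variable {n : ℕ}

/-- The density of the Gaussian measure. -/
def gden (n : ℕ) (c : ℝ) (z : Cn n) : ℝ≥0∞ :=
  ENNReal.ofReal ((c / Real.pi) ^ n * Real.exp (-c * ‖z‖ ^ 2))

lemma gaussMeasure_eq (c : ℝ) : gaussMeasure n c = volume.withDensity (gden n c) := rfl

lemma measurable_gden (c : ℝ) : Measurable (gden n c) := by
  apply Measurable.ennreal_ofReal
  exact (measurable_const.mul (((measurable_norm.pow_const 2).const_mul (-c)).exp))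

lemma gden_pos {c : ℝ} (hc : 0 < c) (z : Cn n) : 0 < gden n c z :=
  ENNReal.ofReal_pos.2 (by positivity)

lemma gden_ne_top (c : ℝ) (z : Cn n) : gden n c z ≠ ⊤ := ENNReal.ofReal_ne_top

/-- integral reduction -/
lemma lintegral_gauss (c : ℝ) {g : Cn n → ℝ≥0∞} (hg : Measurable g) :
    ∫⁻ z, g z ∂gaussMeasure n c = ∫⁻ z, gden n c z * g z ∂volume := by
  rw [gaussMeasure_eq, lintegral_withDensity_eq_lintegral_mul _ (measurable_gden c) hg]; rfl

lemma gauss_ac (c : ℝ) : gaussMeasure n c ≪ (volume : Measure (Cn n)) :=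
  withDensity_absolutelyContinuous _ _

lemma ac_gauss {c : ℝ} (hc : 0 < c) : (volume : Measure (Cn n)) ≪ gaussMeasure n c := by
  intro s hs
  obtain ⟨t, hst, htm, ht0⟩ := exists_measurable_superset_of_null hs
  have h := (withDensity_apply_eq_zero (measurable_gden (n := n) c)).1 ht0
  have : {x : Cn n | gden n c x ≠ 0} = Set.univ := by
    ext x; simp [ne_of_gt (gden_pos hc x)]
  rw [this, Set.univ_inter] at h
  exact measure_mono_null hst h

/-- one-variable complex Gaussian integrability -/
lemma integrable_gauss_complex {c : ℝ} (hc : 0 < c) :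
    Integrable (fun z : ℂ => Real.exp (-c * ‖z‖ ^ 2)) volume := by
  have e := Complex.volume_preserving_equiv_real_prod
  rw [← MeasurePreserving.integrable_comp_emb e.symm
    (Complex.measurableEquivRealProd.symm.measurableEmbedding)]
  have : ((fun z : ℂ => Real.exp (-c * ‖z‖ ^ 2)) ∘ Complex.measurableEquivRealProd.symm)
      = fun q : ℝ × ℝ => Real.exp (-c * q.1 ^ 2) * Real.exp (-c * q.2 ^ 2) := by
    funext q
    have : Complex.measurableEquivRealProd.symm q = Complex.equivRealProd.symm q := rfl
    simp only [Function.comp_apply, this]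
    rw [← Real.exp_add]
    congr 1
    have h2 : Complex.equivRealProd.symm q = (⟨q.1, q.2⟩ : ℂ) := rfl
    have : ‖Complex.equivRealProd.symm q‖ ^ 2 = q.1 ^ 2 + q.2 ^ 2 := by
      rw [h2, Complex.sq_norm, Complex.normSq_mk]; ring
    rw [this]; ring
  rw [this]
  exact (integrable_exp_neg_mul_sq hc).mul_prod (integrable_exp_neg_mul_sq hc)

/-- Gaussian integrability on Cn n. -/
lemma integrable_gauss {c : ℝ} (hc : 0 < c) :
    Integrable (fun x : Cn n => Real.exp (-c * ‖x‖ ^ 2)) volume := by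
  have key : ∀ x : Cn n, Real.exp (-c * ‖x‖ ^ 2) = ∏ i : Fin n, Real.exp (-c * ‖x i‖ ^ 2) := by
    intro x
    rw [← Real.exp_sum]
    congr 1
    rw [EuclideanSpace.norm_eq, Real.sq_sqrt (by positivity)]
    rw [Finset.mul_sum]
  simp only [key]
  rw [← (Cn_volume_preserving n).integrable_comp_emb
    (MeasurableEquiv.toLp 2 (Fin n → ℂ)).measurableEmbedding]
  exact MeasureTheory.Integrable.fintype_prod (𝕜 := ℝ)
    (f := fun _ : Fin n => fun z : ℂ => Real.exp (-c * ‖z‖ ^ 2))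
    (fun _ => integrable_gauss_complex hc)

lemma lintegral_gauss_lt_top {c : ℝ} (hc : 0 < c) :
    ∫⁻ x : Cn n, ENNReal.ofReal (Real.exp (-c * ‖x‖ ^ 2)) ∂volume < ⊤ := by
  rw [← ofReal_integral_eq_lintegral_ofReal (integrable_gauss hc)
    (Filter.Eventually.of_forall fun x => (Real.exp_pos _).le)]
  exact ENNReal.ofReal_lt_top

instance gaussFinite (c : ℝ) [hcf : Fact (0 < c)] : IsFiniteMeasure (gaussMeasure n c) := by
  constructor
  have hc := hcf.out
  rw [← lintegral_one, lintegral_gauss c measurable_const]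
  simp only [mul_one]
  have : ∀ z : Cn n, gden n c z = ENNReal.ofReal ((c / Real.pi) ^ n) *
      ENNReal.ofReal (Real.exp (-c * ‖z‖ ^ 2)) := by
    intro z
    rw [gden, ENNReal.ofReal_mul (le_of_lt (by positivity))]
  simp only [this]
  rw [lintegral_const_mul _ (by
    exact Measurable.ennreal_ofReal (((measurable_norm.pow_const 2).const_mul (-c)).exp))]
  exact ENNReal.mul_lt_top ENNReal.ofReal_lt_top (lintegral_gauss_lt_top hcf.out)

lemma gaussFinite' {c : ℝ} (hc : 0 < c) : IsFiniteMeasure (gaussMeasure n c) :=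
  haveI : Fact (0 < c) := ⟨hc⟩
  gaussFinite c

def ker (n : ℕ) (α : ℝ) (z w : Cn n) : ℂ := Complex.exp ((α : ℂ) * herm z w)

lemma continuous_ker (α : ℝ) : Continuous (Function.uncurry (ker n α)) := by
  apply Complex.continuous_exp.comp
  apply Continuous.mul continuous_const
  exact (continuous_inner (𝕜 := ℂ) (E := Cn n)).comp
    (continuous_snd.prodMk continuous_fst)

lemma measurable_ker (α : ℝ) : Measurable (Function.uncurry (ker n α)) :=
  (continuous_ker α).measurable

lemma ker_nnnorm (α : ℝ) (z w : Cn n) :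
    (‖ker n α z w‖₊ : ℝ≥0∞) = ENNReal.ofReal (Real.exp (α * (inner ℂ w z : ℂ).re)) := by
  rw [← ENNReal.ofReal_coe_nnreal, coe_nnnorm]
  congr 1
  rw [ker, Complex.norm_exp]
  congr 1
  exact Complex.re_ofReal_mul α _

lemma key_pt {α : ℝ} (z w : Cn n) :
    ENNReal.ofReal (Real.exp (-(α/2) * ‖z‖^2)) *
      (ENNReal.ofReal (Real.exp (-α * ‖w‖^2)) * (‖ker n α z w‖₊ : ℝ≥0∞))
    = ENNReal.ofReal (Real.exp (-(α/2) * ‖z-w‖^2)) *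
        ENNReal.ofReal (Real.exp (-(α/2) * ‖w‖^2)) := by
  rw [ker_nnnorm,
    ← ENNReal.ofReal_mul (Real.exp_nonneg _), ← Real.exp_add,
    ← ENNReal.ofReal_mul (Real.exp_nonneg _), ← Real.exp_add,
    ← ENNReal.ofReal_mul (Real.exp_nonneg _), ← Real.exp_add]
  congr 2
  have hn : ‖z - w‖^2 = ‖z‖^2 - 2 * RCLike.re (inner (𝕜 := ℂ) z w) + ‖w‖^2 :=
    norm_sub_sq (𝕜 := ℂ) z w
  have hsym : (inner (𝕜 := ℂ) w z : ℂ).re = (inner (𝕜 := ℂ) z w : ℂ).re := by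
    rw [← inner_conj_symm z w]
    exact Complex.conj_re _
  have hre : RCLike.re (inner (𝕜 := ℂ) z w) = (inner (𝕜 := ℂ) z w : ℂ).re := rfl
  rw [hre] at hn
  rw [hsym]
  linear_combination (α/2) * hn

/-- Schur test. -/
lemma schur {p q : ℝ} (hpq : Real.HolderConjugate p q) {H F : Cn n → ℝ≥0∞}
    (hH : Measurable H) (hsymm : ∀ x, H (-x) = H x) (hF : Measurable F) :
    ∫⁻ z, (∫⁻ w, H (z - w) * F w ∂volume) ^ p ∂volume
      ≤ (∫⁻ x, H x ∂volume) ^ p * ∫⁻ w, F w ^ p ∂volume := by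
  set I := ∫⁻ x, H x ∂volume with hI
  have hp1 := hpq.lt
  have hq1 := hpq.symm.lt
  have hp0 : (0:ℝ) < p := lt_trans one_pos hp1
  have hq0 : (0:ℝ) < q := lt_trans one_pos hq1
  have hHsub : Measurable (fun x : Cn n × Cn n => H (x.1 - x.2)) :=
    hH.comp (measurable_fst.sub measurable_snd)
  have htrans : ∀ z : Cn n, ∫⁻ w, H (z - w) ∂volume = I := by
    intro z
    have h1 : ∀ w : Cn n, H (z - w) = H (w + (-z)) := by
      intro w; rw [← hsymm (w + (-z))]; congr 1; abel
    simp_rw [h1]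
    exact lintegral_add_right_eq_self H (-z)
  have htrans2 : ∀ w : Cn n, ∫⁻ z, H (z - w) ∂volume = I := by
    intro w
    have h1 : ∀ z : Cn n, H (z - w) = H (z + (-w)) := fun z => by
      rw [sub_eq_add_neg]
    simp_rw [h1]
    exact lintegral_add_right_eq_self H (-w)
  have key2 : ∀ z, (∫⁻ w, H (z - w) * F w ∂volume) ^ p
      ≤ I ^ (p/q) * ∫⁻ w, H (z - w) * F w ^ p ∂volume := by
    intro z
    have key : (∫⁻ w, H (z - w) * F w ∂volume)
        ≤ I ^ (1/q) * (∫⁻ w, H (z - w) * F w ^ p ∂volume) ^ (1/p) := by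
      have hf : AEMeasurable (fun w => H (z - w) ^ (1/q)) volume :=
        ((hH.comp (measurable_const.sub measurable_id)).pow_const _).aemeasurable
      have hg : AEMeasurable (fun w => H (z - w) ^ (1/p) * F w) volume :=
        (((hH.comp (measurable_const.sub measurable_id)).pow_const _).mul hF).aemeasurable
      have h := ENNReal.lintegral_mul_le_Lp_mul_Lq volume hpq.symm hf hg
      have hpt : ∀ w, H (z - w) * F w
          = (fun w => H (z - w) ^ (1/q)) w * (fun w => H (z - w) ^ (1/p) * F w) w := by
        intro w
        simp only
        have hsum : 1/q + 1/p = 1 := by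
          rw [one_div, one_div]; exact hpq.symm.inv_add_inv_eq_one
        rw [← mul_assoc, ← ENNReal.rpow_add_of_nonneg _ _ (by positivity) (by positivity),
          hsum, ENNReal.rpow_one]
      have hq' : ∀ w, ((fun w => H (z - w) ^ (1/q)) w) ^ q = H (z - w) := by
        intro w
        simp only
        rw [← ENNReal.rpow_mul, one_div, inv_mul_cancel₀ (ne_of_gt hq0), ENNReal.rpow_one]
      have hp' : ∀ w, ((fun w => H (z - w) ^ (1/p) * F w) w) ^ p
          = H (z - w) * F w ^ p := by
        intro w
        simp only
        rw [ENNReal.mul_rpow_of_nonneg _ _ (le_of_lt hp0), ← ENNReal.rpow_mul,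
          one_div, inv_mul_cancel₀ (ne_of_gt hp0), ENNReal.rpow_one]
      calc ∫⁻ w, H (z - w) * F w ∂volume
          = ∫⁻ w, (fun w => H (z - w) ^ (1/q)) w * (fun w => H (z - w) ^ (1/p) * F w) w
              ∂volume := by exact lintegral_congr hpt
        _ ≤ (∫⁻ w, ((fun w => H (z - w) ^ (1/q)) w) ^ q ∂volume) ^ (1/q) *
            (∫⁻ w, ((fun w => H (z - w) ^ (1/p) * F w) w) ^ p ∂volume) ^ (1/p) := h
        _ = I ^ (1/q) * (∫⁻ w, H (z - w) * F w ^ p ∂volume) ^ (1/p) := by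
            rw [lintegral_congr hq', lintegral_congr hp', htrans z]
    calc (∫⁻ w, H (z - w) * F w ∂volume) ^ p
        ≤ (I ^ (1/q) * (∫⁻ w, H (z - w) * F w ^ p ∂volume) ^ (1/p)) ^ p :=
          ENNReal.rpow_le_rpow key (le_of_lt hp0)
      _ = I ^ (p/q) * ∫⁻ w, H (z - w) * F w ^ p ∂volume := by
          rw [ENNReal.mul_rpow_of_nonneg _ _ (le_of_lt hp0), ← ENNReal.rpow_mul,
            ← ENNReal.rpow_mul]
          congr 2
          · ring
          · rw [one_div, inv_mul_cancel₀ (ne_of_gt hp0), ENNReal.rpow_one]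
  have hmeas_inner : Measurable (Function.uncurry fun z w => H (z - w) * F w ^ p) :=
    hHsub.mul ((hF.comp measurable_snd).pow_const _)
  calc ∫⁻ z, (∫⁻ w, H (z - w) * F w ∂volume) ^ p ∂volume
      ≤ ∫⁻ z, I ^ (p/q) * ∫⁻ w, H (z - w) * F w ^ p ∂volume ∂volume :=
        lintegral_mono key2
    _ = I ^ (p/q) * ∫⁻ z, ∫⁻ w, H (z - w) * F w ^ p ∂volume ∂volume := by
        rw [lintegral_const_mul _ (Measurable.lintegral_prod_right hmeas_inner)]
    _ = I ^ (p/q) * ∫⁻ w, ∫⁻ z, H (z - w) * F w ^ p ∂volume ∂volume := by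
        rw [lintegral_lintegral_swap hmeas_inner.aemeasurable]
    _ = I ^ (p/q) * ∫⁻ w, I * F w ^ p ∂volume := by
        congr 1
        apply lintegral_congr
        intro w
        rw [lintegral_mul_const (F w ^ p)
          (show Measurable fun z : Cn n => H (z - w) from
            hH.comp (measurable_id.sub measurable_const)), htrans2 w, mul_comm]
    _ = I ^ p * ∫⁻ w, F w ^ p ∂volume := by
        have hIp : I ^ (p/q) * I = I ^ p := by
          nth_rewrite 2 [← ENNReal.rpow_one I]
          rw [← ENNReal.rpow_add_of_nonneg _ _ (by positivity) zero_le_one]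
          congr 1
          have h1 : p⁻¹ + q⁻¹ = 1 := hpq.inv_add_inv_eq_one
          have hqne : q ≠ 0 := ne_of_gt hq0
          have hpne : p ≠ 0 := ne_of_gt hp0
          field_simp at h1 ⊢
          linarith
        rw [lintegral_const_mul _ (hF.pow_const _), ← mul_assoc, hIp]



section Master

variable {p α : ℝ}

lemma measurable_sigma (α : ℝ) :
    Measurable (fun z : Cn n => ENNReal.ofReal (Real.exp (-(α/2) * ‖z‖^2))) :=
  Measurable.ennreal_ofReal (((measurable_norm.pow_const 2).const_mul (-(α/2))).exp)

/-- The master Schur-type bound for dominated kernels. -/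
lemma master (hp : 1 < p) (hα : 0 < α)
    {k' : Cn n → Cn n → ℂ} (hk' : Measurable (Function.uncurry k'))
    {Θ : Cn n → ℝ≥0∞} (hΘ : Measurable Θ) (hΘs : ∀ x, Θ (-x) = Θ x)
    (hdom : ∀ z w, (‖k' z w‖₊ : ℝ≥0∞) ≤ (‖ker n α z w‖₊ : ℝ≥0∞) * Θ (z - w))
    {f : Cn n → ℂ} (hf : Measurable f) :
    ∫⁻ z, (∫⁻ w, ‖k' z w‖₊ * ‖f w‖₊ ∂gaussMeasure n α) ^ p ∂gaussMeasure n (p*α/2)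
      ≤ (ENNReal.ofReal ((α/Real.pi)^n) *
          ∫⁻ x, ENNReal.ofReal (Real.exp (-(α/2) * ‖x‖^2)) * Θ x ∂volume) ^ p *
        ∫⁻ z, ‖f z‖₊ ^ p ∂gaussMeasure n (p*α/2) := by
  have hp0 : (0:ℝ) < p := lt_trans one_pos hp
  have hpα : 0 < p * α / 2 := by positivity
  haveI : IsFiniteMeasure (gaussMeasure n α) := gaussFinite' hα
  set cα : ℝ≥0∞ := ENNReal.ofReal ((α/Real.pi)^n) with hcα
  set cp : ℝ≥0∞ := ENNReal.ofReal ((p*α/2/Real.pi)^n) with hcp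
  set σ : Cn n → ℝ≥0∞ := fun z => ENNReal.ofReal (Real.exp (-(α/2) * ‖z‖^2)) with hσ
  set H : Cn n → ℝ≥0∞ := fun x => σ x * Θ x with hH
  set F : Cn n → ℝ≥0∞ := fun w => σ w * ‖f w‖₊ with hF
  have hσm : Measurable σ := measurable_sigma α
  have hHm : Measurable H := hσm.mul hΘ
  have hFm : Measurable F := hσm.mul hf.enorm
  have hHs : ∀ x, H (-x) = H x := by
    intro x; simp only [hH, hσ, norm_neg, hΘs]
  -- density identities
  have hA : ∀ z : Cn n, gden n (p*α/2) z = cp * (σ z) ^ p := by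
    intro z
    rw [gden, ENNReal.ofReal_mul (le_of_lt (by positivity))]
    congr 1
    rw [hσ, ENNReal.ofReal_rpow_of_pos (Real.exp_pos _), ← Real.exp_mul]
    congr 1
    ring
  have hB : ∀ w : Cn n, gden n α w
      = cα * ENNReal.ofReal (Real.exp (-α * ‖w‖^2)) := by
    intro w
    rw [gden, ENNReal.ofReal_mul (le_of_lt (by positivity))]
  -- integrand measurability
  have hinner_int : Measurable (Function.uncurry fun z w => (‖k' z w‖₊ : ℝ≥0∞) * ‖f w‖₊) :=
    hk'.enorm.mul ((hf.comp measurable_snd).enorm)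
  have hsec : ∀ z : Cn n, Measurable (fun w => (‖k' z w‖₊ : ℝ≥0∞) * ‖f w‖₊) := by
    intro z
    exact ((hk'.comp measurable_prodMk_left).enorm).mul hf.enorm
  have hinner_meas : Measurable (fun z => ∫⁻ w, (‖k' z w‖₊ : ℝ≥0∞) * ‖f w‖₊
      ∂gaussMeasure n α) := Measurable.lintegral_prod_right hinner_int
  -- the key pointwise bound after multiplying by σ z
  have hD : ∀ z : Cn n, σ z * ∫⁻ w, (‖k' z w‖₊ : ℝ≥0∞) * ‖f w‖₊ ∂gaussMeasure n α
      ≤ cα * ∫⁻ w, H (z - w) * F w ∂volume := by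
    intro z
    rw [lintegral_gauss α (hsec z), ← lintegral_const_mul _
      (show Measurable fun w => gden n α w * ((‖k' z w‖₊ : ℝ≥0∞) * ‖f w‖₊) from
        (measurable_gden α).mul (hsec z))]
    rw [← lintegral_const_mul _ (show Measurable fun w : Cn n => H (z - w) * F w from
      ((hHm.comp (measurable_const.sub measurable_id))).mul hFm)]
    apply lintegral_mono
    intro w
    calc σ z * (gden n α w * ((‖k' z w‖₊ : ℝ≥0∞) * ‖f w‖₊))
        ≤ σ z * (gden n α w * (((‖ker n α z w‖₊ : ℝ≥0∞) * Θ (z - w)) * ‖f w‖₊)) := by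
          gcongr
          exact hdom z w
      _ = (σ z * (ENNReal.ofReal (Real.exp (-α * ‖w‖^2)) * (‖ker n α z w‖₊ : ℝ≥0∞))) *
            (cα * Θ (z - w) * ‖f w‖₊) := by
          rw [hB w]; ring
      _ = (ENNReal.ofReal (Real.exp (-(α/2) * ‖z - w‖^2)) * σ w) *
            (cα * Θ (z - w) * ‖f w‖₊) := by
          rw [hσ]
          rw [key_pt]
      _ = cα * (H (z - w) * F w) := by
          rw [hH, hF, hσ]; ring
  -- assemble
  have hq := Real.HolderConjugate.conjExponent hp
  calc ∫⁻ z, (∫⁻ w, (‖k' z w‖₊ : ℝ≥0∞) * ‖f w‖₊ ∂gaussMeasure n α) ^ p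
        ∂gaussMeasure n (p*α/2)
      = ∫⁻ z, gden n (p*α/2) z *
          (∫⁻ w, (‖k' z w‖₊ : ℝ≥0∞) * ‖f w‖₊ ∂gaussMeasure n α) ^ p ∂volume := by
        rw [lintegral_gauss _ (hinner_meas.pow_const _)]
    _ = ∫⁻ z, cp * (σ z * ∫⁻ w, (‖k' z w‖₊ : ℝ≥0∞) * ‖f w‖₊ ∂gaussMeasure n α) ^ p
          ∂volume := by
        apply lintegral_congr
        intro z
        rw [hA z, ENNReal.mul_rpow_of_nonneg _ _ (le_of_lt hp0), mul_assoc]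
    _ ≤ ∫⁻ z, cp * (cα * ∫⁻ w, H (z - w) * F w ∂volume) ^ p ∂volume := by
        apply lintegral_mono
        intro z
        exact mul_le_mul_right (ENNReal.rpow_le_rpow (hD z) (le_of_lt hp0)) cp
    _ = cp * cα ^ p * ∫⁻ z, (∫⁻ w, H (z - w) * F w ∂volume) ^ p ∂volume := by
        simp_rw [ENNReal.mul_rpow_of_nonneg _ _ (le_of_lt hp0), ← mul_assoc]
        rw [lintegral_const_mul _ ((Measurable.lintegral_prod_right
          (show Measurable (Function.uncurry fun z w : Cn n => H (z - w) * F w) from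
            (hHm.comp (measurable_fst.sub measurable_snd)).mul
              (hFm.comp measurable_snd))).pow_const _)]
    _ ≤ cp * cα ^ p * ((∫⁻ x, H x ∂volume) ^ p * ∫⁻ w, F w ^ p ∂volume) := by
        exact mul_le_mul_right (schur hq hHm hHs hFm) _
    _ = (cα * ∫⁻ x, H x ∂volume) ^ p * (cp * ∫⁻ w, F w ^ p ∂volume) := by
        rw [ENNReal.mul_rpow_of_nonneg _ _ (le_of_lt hp0)]; ring
    _ = (cα * ∫⁻ x, H x ∂volume) ^ p * ∫⁻ z, ‖f z‖₊ ^ p ∂gaussMeasure n (p*α/2) := by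
        congr 1
        rw [lintegral_gauss _ (show Measurable fun z => (‖f z‖₊ : ℝ≥0∞) ^ p from
          hf.enorm.pow_const _), ← lintegral_const_mul _
          (hFm.pow_const _)]
        apply lintegral_congr
        intro w
        rw [hF, ENNReal.mul_rpow_of_nonneg _ _ (le_of_lt hp0), ← mul_assoc, ← hA w]

end Master


section Kernels

variable {α r : ℝ}

def kcut (n : ℕ) (α r : ℝ) (z w : Cn n) : ℂ := if dist z w ≤ r then ker n α z w else 0
def ktail (n : ℕ) (α r : ℝ) (z w : Cn n) : ℂ := if dist z w ≤ r then 0 else ker n α z w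
def thetaTail (r : ℝ) (x : Cn n) : ℝ≥0∞ := if ‖x‖ ≤ r then 0 else 1
def thetaCut (r : ℝ) (x : Cn n) : ℝ≥0∞ := if ‖x‖ ≤ r then 1 else 0

lemma measurable_kcut (n : ℕ) (α r : ℝ) : Measurable (Function.uncurry (kcut n α r)) := by
  have hset : MeasurableSet {q : Cn n × Cn n | dist q.1 q.2 ≤ r} :=
    measurableSet_le (measurable_fst.dist measurable_snd) measurable_const
  exact Measurable.ite hset (measurable_ker α) measurable_const

lemma measurable_ktail (n : ℕ) (α r : ℝ) : Measurable (Function.uncurry (ktail n α r)) := by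
  have hset : MeasurableSet {q : Cn n × Cn n | dist q.1 q.2 ≤ r} :=
    measurableSet_le (measurable_fst.dist measurable_snd) measurable_const
  exact Measurable.ite hset measurable_const (measurable_ker α)

lemma measurable_thetaTail (r : ℝ) : Measurable (thetaTail (n := n) r) := by
  have hset : MeasurableSet {x : Cn n | ‖x‖ ≤ r} :=
    measurableSet_le measurable_norm measurable_const
  exact Measurable.ite hset measurable_const measurable_const

lemma measurable_thetaCut (r : ℝ) : Measurable (thetaCut (n := n) r) := by
  have hset : MeasurableSet {x : Cn n | ‖x‖ ≤ r} :=
    measurableSet_le measurable_norm measurable_const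
  exact Measurable.ite hset measurable_const measurable_const

lemma thetaTail_symm (r : ℝ) (x : Cn n) : thetaTail r (-x) = thetaTail r x := by
  simp [thetaTail, norm_neg]

lemma thetaCut_symm (r : ℝ) (x : Cn n) : thetaCut r (-x) = thetaCut r x := by
  simp [thetaCut, norm_neg]

lemma thetaTail_le_one (r : ℝ) (x : Cn n) : thetaTail r x ≤ 1 := by
  rw [thetaTail]; split <;> simp

lemma thetaCut_le_one (r : ℝ) (x : Cn n) : thetaCut r x ≤ 1 := by
  rw [thetaCut]; split <;> simp

lemma kcut_dom (n : ℕ) (α r : ℝ) (z w : Cn n) :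
    (‖kcut n α r z w‖₊ : ℝ≥0∞) ≤ (‖ker n α z w‖₊ : ℝ≥0∞) * thetaCut r (z - w) := by
  by_cases h : dist z w ≤ r
  · rw [kcut, if_pos h, thetaCut, if_pos (by rwa [← dist_eq_norm]), mul_one]
  · rw [kcut, if_neg h]; simp

lemma ktail_dom (n : ℕ) (α r : ℝ) (z w : Cn n) :
    (‖ktail n α r z w‖₊ : ℝ≥0∞) ≤ (‖ker n α z w‖₊ : ℝ≥0∞) * thetaTail r (z - w) := by
  by_cases h : dist z w ≤ r
  · rw [ktail, if_pos h]; simp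
  · rw [ktail, if_neg h, thetaTail, if_neg (by rwa [← dist_eq_norm]), mul_one]

lemma ker_dom (n : ℕ) (α : ℝ) (z w : Cn n) :
    (‖ker n α z w‖₊ : ℝ≥0∞) ≤ (‖ker n α z w‖₊ : ℝ≥0∞) * (fun _ : Cn n => (1:ℝ≥0∞)) (z - w) :=
  le_of_eq (mul_one _).symm

lemma cut_add_tail (n : ℕ) (α r : ℝ) (z w : Cn n) :
    kcut n α r z w + ktail n α r z w = ker n α z w := by
  by_cases h : dist z w ≤ r
  · rw [kcut, ktail, if_pos h, if_pos h, add_zero]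
  · rw [kcut, ktail, if_neg h, if_neg h, zero_add]

/-- tail integral -/
def Itail (n : ℕ) (α r : ℝ) : ℝ≥0∞ :=
  ∫⁻ x : Cn n, ENNReal.ofReal (Real.exp (-(α/2) * ‖x‖^2)) * thetaTail r x ∂volume

def Ifull (n : ℕ) (α : ℝ) : ℝ≥0∞ :=
  ∫⁻ x : Cn n, ENNReal.ofReal (Real.exp (-(α/2) * ‖x‖^2)) ∂volume

lemma Ifull_lt_top {α : ℝ} (hα : 0 < α) : Ifull n α < ⊤ :=
  lintegral_gauss_lt_top (by positivity)

lemma IΘ_le_Ifull {α : ℝ} {Θ : Cn n → ℝ≥0∞} (hΘle : ∀ x, Θ x ≤ 1) :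
    ∫⁻ x : Cn n, ENNReal.ofReal (Real.exp (-(α/2) * ‖x‖^2)) * Θ x ∂volume ≤ Ifull n α := by
  apply lintegral_mono
  intro x
  calc ENNReal.ofReal (Real.exp (-(α/2) * ‖x‖^2)) * Θ x
      ≤ ENNReal.ofReal (Real.exp (-(α/2) * ‖x‖^2)) * 1 := mul_le_mul_right (hΘle x) _
    _ = _ := mul_one _

lemma Itail_tendsto {α : ℝ} (hα : 0 < α) :
    Tendsto (fun k : ℕ => Itail n α (k+1)) atTop (nhds 0) := by
  have h0 : (0:ℝ≥0∞) = ∫⁻ _x : Cn n, 0 ∂volume := by rw [lintegral_zero]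
  rw [h0]
  apply tendsto_lintegral_of_dominated_convergence
    (bound := fun x : Cn n => ENNReal.ofReal (Real.exp (-(α/2) * ‖x‖^2)))
  · exact fun k => (measurable_sigma α).mul (measurable_thetaTail _)
  · intro k
    apply Filter.Eventually.of_forall
    intro x
    calc ENNReal.ofReal (Real.exp (-(α/2) * ‖x‖^2)) * thetaTail (k+1) x
        ≤ ENNReal.ofReal (Real.exp (-(α/2) * ‖x‖^2)) * 1 :=
          mul_le_mul_right (thetaTail_le_one _ x) _
      _ = _ := mul_one _
  · exact (Ifull_lt_top hα).ne
  · apply Filter.Eventually.of_forall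
    intro x
    apply Filter.Tendsto.congr' _ tendsto_const_nhds
    filter_upwards [Filter.eventually_ge_atTop (Nat.ceil ‖x‖)] with k hk
    have hx : ‖x‖ ≤ (k:ℝ) + 1 := by
      have := Nat.le_ceil ‖x‖
      have h2 : ((Nat.ceil ‖x‖ : ℕ) : ℝ) ≤ (k:ℝ) := by exact_mod_cast hk
      linarith
    rw [thetaTail, if_pos hx, mul_zero]

end Kernels


section LpBound

variable {p α : ℝ}

lemma Tfun_props (hp : 1 < p) (hα : 0 < α)
    {k' : Cn n → Cn n → ℂ} (hk' : Measurable (Function.uncurry k'))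
    {Θ : Cn n → ℝ≥0∞} (hΘ : Measurable Θ) (hΘs : ∀ x, Θ (-x) = Θ x)
    (hΘle : ∀ x, Θ x ≤ 1)
    (hdom : ∀ z w, (‖k' z w‖₊ : ℝ≥0∞) ≤ (‖ker n α z w‖₊ : ℝ≥0∞) * Θ (z - w))
    (f : Lpa n p α) :
    MemLp (fun z => ∫ w, k' z w * f w ∂gaussMeasure n α) (ENNReal.ofReal p)
        (gaussMeasure n (p*α/2))
    ∧ eLpNorm (fun z => ∫ w, k' z w * f w ∂gaussMeasure n α) (ENNReal.ofReal p)
          (gaussMeasure n (p*α/2))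
        ≤ (ENNReal.ofReal ((α/Real.pi)^n) *
            ∫⁻ x, ENNReal.ofReal (Real.exp (-(α/2) * ‖x‖^2)) * Θ x ∂volume) *
          eLpNorm (⇑f) (ENNReal.ofReal p) (gaussMeasure n (p*α/2))
    ∧ (∀ᵐ z ∂gaussMeasure n (p*α/2), Integrable (fun w => k' z w * f w)
        (gaussMeasure n α)) := by
  have hp0 : (0:ℝ) < p := lt_trans one_pos hp
  have hpα : 0 < p * α / 2 := by positivity
  haveI : IsFiniteMeasure (gaussMeasure n α) := gaussFinite' hα
  haveI : IsFiniteMeasure (gaussMeasure n (p*α/2)) := gaussFinite' hpα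
  have hq0 : (ENNReal.ofReal p) ≠ 0 := by
    simp [ENNReal.ofReal_eq_zero, not_le, hp0]
  have hqt : (ENNReal.ofReal p) ≠ ⊤ := ENNReal.ofReal_ne_top
  have hqr : (ENNReal.ofReal p).toReal = p := ENNReal.toReal_ofReal (le_of_lt hp0)
  have hfm : Measurable (⇑f) := (Lp.stronglyMeasurable f).measurable
  set cI : ℝ≥0∞ := ENNReal.ofReal ((α/Real.pi)^n) *
    ∫⁻ x, ENNReal.ofReal (Real.exp (-(α/2) * ‖x‖^2)) * Θ x ∂volume with hcI
  have hcI_lt : cI < ⊤ := by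
    apply ENNReal.mul_lt_top ENNReal.ofReal_lt_top
    exact lt_of_le_of_lt (IΘ_le_Ifull hΘle) (Ifull_lt_top hα)
  have hmaster := master hp hα hk' hΘ hΘs hdom hfm
  -- finiteness of ∫ ‖f‖^p
  have hfLp : ∫⁻ z, (‖f z‖₊ : ℝ≥0∞) ^ p ∂gaussMeasure n (p*α/2) < ⊤ := by
    have h1 := Lp.eLpNorm_lt_top f
    rw [eLpNorm_eq_lintegral_rpow_enorm_toReal hq0 hqt, hqr] at h1
    change (∫⁻ x, (‖f x‖₊ : ℝ≥0∞) ^ p ∂gaussMeasure n (p*α/2)) ^ (1/p) < ⊤ at h1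
    by_contra hcon
    push_neg at hcon
    have : ∫⁻ z, (‖f z‖₊ : ℝ≥0∞) ^ p ∂gaussMeasure n (p*α/2) = ⊤ := top_le_iff.1 hcon
    rw [this, ENNReal.top_rpow_of_pos (by positivity)] at h1
    exact (lt_irrefl _ h1)
  have hLHSfin : ∫⁻ z, (∫⁻ w, (‖k' z w‖₊ : ℝ≥0∞) * ‖f w‖₊ ∂gaussMeasure n α) ^ p
      ∂gaussMeasure n (p*α/2) < ⊤ := by
    apply lt_of_le_of_lt hmaster
    exact ENNReal.mul_lt_top (ENNReal.rpow_lt_top_of_nonneg (le_of_lt hp0) hcI_lt.ne) hfLp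
  have hsec : ∀ z : Cn n, Measurable (fun w => (‖k' z w‖₊ : ℝ≥0∞) * ‖f w‖₊) := fun z =>
    ((hk'.comp measurable_prodMk_left).enorm).mul hfm.enorm
  have hinner_meas : Measurable (fun z => ∫⁻ w, (‖k' z w‖₊ : ℝ≥0∞) * ‖f w‖₊
      ∂gaussMeasure n α) := Measurable.lintegral_prod_right
    (hk'.enorm.mul ((hfm.comp measurable_snd).enorm))
  -- a.e. integrability
  have hae : ∀ᵐ z ∂gaussMeasure n (p*α/2), Integrable (fun w => k' z w * f w)
      (gaussMeasure n α) := by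
    have h1 : ∀ᵐ z ∂gaussMeasure n (p*α/2),
        (∫⁻ w, (‖k' z w‖₊ : ℝ≥0∞) * ‖f w‖₊ ∂gaussMeasure n α) ^ p < ⊤ :=
      ae_lt_top (hinner_meas.pow_const _) hLHSfin.ne
    filter_upwards [h1] with z hz
    refine ⟨((hk'.comp measurable_prodMk_left).mul hfm).aestronglyMeasurable, ?_⟩
    rw [hasFiniteIntegral_def]
    have heq : ∫⁻ w, (‖k' z w * f w‖₊ : ℝ≥0∞) ∂gaussMeasure n α
        = ∫⁻ w, (‖k' z w‖₊ : ℝ≥0∞) * ‖f w‖₊ ∂gaussMeasure n α := by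
      apply lintegral_congr
      intro w
      rw [nnnorm_mul, ENNReal.coe_mul]
    rw [show (∫⁻ a, ‖k' z a * f a‖ₑ ∂gaussMeasure n α)
      = ∫⁻ w, (‖k' z w * f w‖₊ : ℝ≥0∞) ∂gaussMeasure n α from rfl, heq]
    by_contra hcon
    push_neg at hcon
    rw [top_le_iff.1 hcon, ENNReal.top_rpow_of_pos (by positivity)] at hz
    exact lt_irrefl _ hz
  -- eLpNorm bound
  have hTle : ∀ z, (‖∫ w, k' z w * f w ∂gaussMeasure n α‖₊ : ℝ≥0∞)
      ≤ ∫⁻ w, (‖k' z w‖₊ : ℝ≥0∞) * ‖f w‖₊ ∂gaussMeasure n α := by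
    intro z
    calc (‖∫ w, k' z w * f w ∂gaussMeasure n α‖₊ : ℝ≥0∞)
        ≤ ∫⁻ w, (‖k' z w * f w‖₊ : ℝ≥0∞) ∂gaussMeasure n α :=
          enorm_integral_le_lintegral_enorm _
      _ = _ := lintegral_congr (fun w => by rw [nnnorm_mul, ENNReal.coe_mul])
  have hbound : eLpNorm (fun z => ∫ w, k' z w * f w ∂gaussMeasure n α) (ENNReal.ofReal p)
      (gaussMeasure n (p*α/2)) ≤ cI * eLpNorm (⇑f) (ENNReal.ofReal p)
        (gaussMeasure n (p*α/2)) := by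
    rw [eLpNorm_eq_lintegral_rpow_enorm_toReal hq0 hqt,
      eLpNorm_eq_lintegral_rpow_enorm_toReal hq0 hqt, hqr]
    calc (∫⁻ z, (‖∫ w, k' z w * f w ∂gaussMeasure n α‖₊ : ℝ≥0∞) ^ p
          ∂gaussMeasure n (p*α/2)) ^ (1/p)
        ≤ (∫⁻ z, (∫⁻ w, (‖k' z w‖₊ : ℝ≥0∞) * ‖f w‖₊ ∂gaussMeasure n α) ^ p
            ∂gaussMeasure n (p*α/2)) ^ (1/p) := by
          apply ENNReal.rpow_le_rpow _ (by positivity)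
          exact lintegral_mono (fun z => ENNReal.rpow_le_rpow (hTle z) (le_of_lt hp0))
      _ ≤ (cI ^ p * ∫⁻ z, (‖f z‖₊ : ℝ≥0∞) ^ p ∂gaussMeasure n (p*α/2)) ^ (1/p) :=
          ENNReal.rpow_le_rpow hmaster (by positivity)
      _ = cI * (∫⁻ z, (‖f z‖₊ : ℝ≥0∞) ^ p ∂gaussMeasure n (p*α/2)) ^ (1/p) := by
          rw [ENNReal.mul_rpow_of_nonneg _ _ (by positivity), ← ENNReal.rpow_mul,
            mul_one_div, div_self (ne_of_gt hp0), ENNReal.rpow_one]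
  -- strong measurability of the output
  have hsm : StronglyMeasurable (fun z => ∫ w, k' z w * f w ∂gaussMeasure n α) := by
    apply StronglyMeasurable.integral_prod_right'
      (f := fun q : Cn n × Cn n => k' q.1 q.2 * f q.2)
    exact (hk'.mul (hfm.comp measurable_snd)).stronglyMeasurable
  refine ⟨⟨hsm.aestronglyMeasurable, ?_⟩, hbound, hae⟩
  exact lt_of_le_of_lt hbound (ENNReal.mul_lt_top hcI_lt (Lp.eLpNorm_lt_top f))

end LpBound


section Op

variable {p α : ℝ}

lemma ae_gauss_trans {c c' : ℝ} (hc : 0 < c) {β : Type*} {f g : Cn n → β}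
    (h : f =ᵐ[gaussMeasure n c] g) : f =ᵐ[gaussMeasure n c'] g :=
  ((h.filter_mono (ac_gauss hc).ae_le).filter_mono (gauss_ac c').ae_le)

/-- Construction of the integral operator on `Lp` associated to a dominated kernel. -/
lemma exists_op (hp : 1 < p) (hα : 0 < α) [Fact (1 ≤ ENNReal.ofReal p)]
    {k' : Cn n → Cn n → ℂ} (hk' : Measurable (Function.uncurry k'))
    {Θ : Cn n → ℝ≥0∞} (hΘ : Measurable Θ) (hΘs : ∀ x, Θ (-x) = Θ x)
    (hΘle : ∀ x, Θ x ≤ 1)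
    (hdom : ∀ z w, (‖k' z w‖₊ : ℝ≥0∞) ≤ (‖ker n α z w‖₊ : ℝ≥0∞) * Θ (z - w)) :
    ∃ B : Lpa n p α →L[ℂ] Lpa n p α, ∀ f : Lpa n p α,
      ⇑(B f) =ᵐ[gaussMeasure n (p*α/2)]
        fun z => ∫ w, k' z w * f w ∂gaussMeasure n α := by
  have hp0 : (0:ℝ) < p := lt_trans one_pos hp
  have hpα : 0 < p * α / 2 := by positivity
  have hprops := fun f : Lpa n p α => Tfun_props hp hα hk' hΘ hΘs hΘle hdom f
  set cI : ℝ≥0∞ := ENNReal.ofReal ((α/Real.pi)^n) *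
    ∫⁻ x, ENNReal.ofReal (Real.exp (-(α/2) * ‖x‖^2)) * Θ x ∂volume with hcI
  -- the underlying linear map
  set T : Lpa n p α → Lpa n p α := fun f => ((hprops f).1).toLp _ with hT
  have hTrep : ∀ f : Lpa n p α, ⇑(T f) =ᵐ[gaussMeasure n (p*α/2)]
      fun z => ∫ w, k' z w * f w ∂gaussMeasure n α := fun f => MemLp.coeFn_toLp _
  have hmap_add : ∀ f g : Lpa n p α, T (f + g) = T f + T g := by
    intro f g
    apply Lp.ext (μ := gaussMeasure n (p*α/2))
    have h1 : ⇑(f + g) =ᵐ[gaussMeasure n α] ⇑f + ⇑g :=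
      ae_gauss_trans hpα (Lp.coeFn_add f g)
    have h2 : (fun z => ∫ w, k' z w * (f + g) w ∂gaussMeasure n α)
        =ᵐ[gaussMeasure n (p*α/2)]
        fun z => ∫ w, k' z w * f w ∂gaussMeasure n α
          + ∫ w, k' z w * g w ∂gaussMeasure n α := by
      filter_upwards [(hprops f).2.2, (hprops g).2.2] with z hzf hzg
      have heq : ∫ w, k' z w * (f + g) w ∂gaussMeasure n α
          = ∫ w, (k' z w * f w + k' z w * g w) ∂gaussMeasure n α := by
        apply integral_congr_ae
        filter_upwards [h1] with w hw
        rw [hw]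
        simp [mul_add]
      rw [heq, integral_add hzf hzg]
    calc ⇑(T (f + g)) =ᵐ[gaussMeasure n (p*α/2)]
        fun z => ∫ w, k' z w * (f + g) w ∂gaussMeasure n α := hTrep (f + g)
      _ =ᵐ[gaussMeasure n (p*α/2)] fun z => (∫ w, k' z w * f w ∂gaussMeasure n α)
          + ∫ w, k' z w * g w ∂gaussMeasure n α := h2
      _ =ᵐ[gaussMeasure n (p*α/2)] ⇑(T f + T g) := by
          have := ((hTrep f).add (hTrep g)).symm
          refine this.trans ?_
          exact (Lp.coeFn_add (T f) (T g)).symm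
  have hmap_smul : ∀ (c : ℂ) (f : Lpa n p α), T (c • f) = c • T f := by
    intro c f
    apply Lp.ext (μ := gaussMeasure n (p*α/2))
    have h1 : ⇑(c • f) =ᵐ[gaussMeasure n α] c • ⇑f :=
      ae_gauss_trans hpα (Lp.coeFn_smul c f)
    have h2 : (fun z => ∫ w, k' z w * (c • f) w ∂gaussMeasure n α)
        = fun z => c • ∫ w, k' z w * f w ∂gaussMeasure n α := by
      funext z
      rw [← integral_smul]
      apply integral_congr_ae
      filter_upwards [h1] with w hw
      rw [hw]
      simp only [Pi.smul_apply, smul_eq_mul]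
      ring
    calc ⇑(T (c • f)) =ᵐ[gaussMeasure n (p*α/2)]
        fun z => ∫ w, k' z w * (c • f) w ∂gaussMeasure n α := hTrep (c • f)
      _ = fun z => c • ∫ w, k' z w * f w ∂gaussMeasure n α := h2
      _ =ᵐ[gaussMeasure n (p*α/2)] c • ⇑(T f) := by
          have h3 : (c • ⇑(T f)) =ᵐ[gaussMeasure n (p*α/2)]
              fun z => c • ∫ w, k' z w * f w ∂gaussMeasure n α :=
            (hTrep f).mono (fun z hz => by simp only [Pi.smul_apply, hz])
          exact h3.symm
      _ =ᵐ[gaussMeasure n (p*α/2)] ⇑(c • T f) := (Lp.coeFn_smul c (T f)).symm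
  set L : Lpa n p α →ₗ[ℂ] Lpa n p α :=
    { toFun := T, map_add' := hmap_add, map_smul' := hmap_smul } with hL
  have hbound : ∀ f : Lpa n p α, ‖L f‖ ≤ cI.toReal * ‖f‖ := by
    intro f
    have h1 : ‖L f‖ = (eLpNorm (fun z => ∫ w, k' z w * f w ∂gaussMeasure n α)
        (ENNReal.ofReal p) (gaussMeasure n (p*α/2))).toReal := Lp.norm_toLp _ ((hprops f).1)
    rw [h1, Lp.norm_def]
    rw [← ENNReal.toReal_mul]
    apply ENNReal.toReal_mono
    · exact (ENNReal.mul_lt_top (by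
        apply ENNReal.mul_lt_top ENNReal.ofReal_lt_top
        exact lt_of_le_of_lt (IΘ_le_Ifull hΘle) (Ifull_lt_top hα)) (Lp.eLpNorm_lt_top f)).ne
    · exact (hprops f).2.1
  exact ⟨LinearMap.mkContinuous L cI.toReal hbound, fun f => hTrep f⟩

end Op

end S9

/-- The projection P_α, viewed as a bounded operator on L_α^p, is
band-dominated: it is the operator-norm limit of a sequence of band operators. -/
theorem statement9 (n : ℕ) (hn : 1 ≤ n) (p α : ℝ) (hp : 1 < p) (hα : 0 < α)
    [Fact (1 ≤ ENNReal.ofReal p)]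
    (P : Lpa n p α →L[ℂ] Lpa n p α) (hP : IsProjOp n p α P) :
    IsBDO n p α P := by
  classical
  have hp0 : (0:ℝ) < p := lt_trans one_pos hp
  have hpα : 0 < p * α / 2 := by positivity
  -- the band operators: truncations of the kernel at radius k+1
  have hBex : ∀ k : ℕ, ∃ B : Lpa n p α →L[ℂ] Lpa n p α, ∀ f : Lpa n p α,
      ⇑(B f) =ᵐ[gaussMeasure n (p*α/2)]
        fun z => ∫ w, S9.kcut n α ((k:ℝ)+1) z w * f w ∂gaussMeasure n α := fun k =>
    S9.exists_op hp hα (S9.measurable_kcut n α _) (S9.measurable_thetaCut _)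
      (S9.thetaCut_symm _) (S9.thetaCut_le_one _) (S9.kcut_dom n α _)
  choose B hB using hBex
  refine ⟨B, fun k => ?_, ?_⟩
  · -- band property
    refine ⟨(k:ℝ)+1, by positivity, ?_⟩
    intro f g _ _ _ _ Mf Mg hMf hMg hdist
    refine ContinuousLinearMap.ext fun u => ?_
    rw [ContinuousLinearMap.comp_apply, ContinuousLinearMap.comp_apply,
      ContinuousLinearMap.zero_apply]
    apply MeasureTheory.Lp.ext (μ := gaussMeasure n (p*α/2))
    have h3 : ⇑(Mg u) =ᵐ[gaussMeasure n α] fun w => g w * u w :=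
      S9.ae_gauss_trans hpα (hMg u)
    have hval : ∀ z : Cn n,
        (∫ w, S9.kcut n α ((k:ℝ)+1) z w * (Mg u) w ∂gaussMeasure n α)
        = ∫ w, S9.kcut n α ((k:ℝ)+1) z w * (g w * u w) ∂gaussMeasure n α := by
      intro z
      apply integral_congr_ae
      filter_upwards [h3] with w hw
      rw [hw]
    have hzero : ∀ z : Cn n, f z ≠ 0 →
        (fun w => S9.kcut n α ((k:ℝ)+1) z w * (g w * u w)) = fun _ => (0:ℂ) := by
      intro z hz
      funext w
      by_cases hgw : g w = 0
      · rw [hgw]; ring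
      · have hzs : z ∈ Function.support f := hz
        have hws : w ∈ Function.support g := hgw
        have hle : setDist (Function.support f) (Function.support g) ≤ edist z w := by
          calc setDist (Function.support f) (Function.support g)
              ≤ ⨅ y ∈ Function.support g, edist z y := by
                exact iInf₂_le z hzs
            _ ≤ edist z w := iInf₂_le w hws
        have hlt : ENNReal.ofReal ((k:ℝ)+1) < edist z w := lt_of_lt_of_le hdist hle
        rw [edist_dist] at hlt
        have hd : (k:ℝ)+1 < dist z w :=
          (ENNReal.ofReal_lt_ofReal_iff_of_nonneg (by positivity)).1 hlt
        rw [S9.kcut, if_neg (not_le.2 hd)]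
        ring
    calc ⇑(Mf (B k (Mg u))) =ᵐ[gaussMeasure n (p*α/2)]
        fun z => f z * (B k (Mg u)) z := hMf (B k (Mg u))
      _ =ᵐ[gaussMeasure n (p*α/2)]
          fun z => f z * ∫ w, S9.kcut n α ((k:ℝ)+1) z w * (Mg u) w ∂gaussMeasure n α := by
          filter_upwards [hB k (Mg u)] with z hz
          rw [hz]
      _ =ᵐ[gaussMeasure n (p*α/2)] fun _ => (0:ℂ) := by
          apply Filter.Eventually.of_forall
          intro z
          show f z * (∫ w, S9.kcut n α ((k:ℝ)+1) z w * (Mg u) w ∂gaussMeasure n α) = 0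
          by_cases hz : f z = 0
          · rw [hz]; ring
          · rw [hval z, hzero z hz, integral_zero]; ring
      _ =ᵐ[gaussMeasure n (p*α/2)] ⇑(0 : Lpa n p α) := by
          have := MeasureTheory.Lp.coeFn_zero (E := ℂ) (p := ENNReal.ofReal p)
            (μ := gaussMeasure n (p*α/2))
          exact this.symm
  · -- norm convergence
    set cUp : ℕ → ℝ≥0∞ := fun k => ENNReal.ofReal ((α/Real.pi)^n) *
      S9.Itail n α ((k:ℝ)+1) with hcUp
    have hcUp_fin : ∀ k, cUp k < ⊤ := by
      intro k
      exact ENNReal.mul_lt_top ENNReal.ofReal_lt_top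
        (lt_of_le_of_lt (S9.IΘ_le_Ifull (S9.thetaTail_le_one _)) (S9.Ifull_lt_top hα))
    have hq0 : (ENNReal.ofReal p) ≠ 0 := by
      simp [ENNReal.ofReal_eq_zero, not_le, hp0]
    have hqt : (ENNReal.ofReal p) ≠ ⊤ := ENNReal.ofReal_ne_top
    have hkey : ∀ k (f : Lpa n p α), ‖(P - B k) f‖ ≤ (cUp k).toReal * ‖f‖ := by
      intro k f
      have hcut := S9.Tfun_props hp hα (S9.measurable_kcut n α ((k:ℝ)+1))
        (S9.measurable_thetaCut _) (S9.thetaCut_symm _) (S9.thetaCut_le_one _)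
        (S9.kcut_dom n α _) f
      have htail := S9.Tfun_props hp hα (S9.measurable_ktail n α ((k:ℝ)+1))
        (S9.measurable_thetaTail _) (S9.thetaTail_symm _) (S9.thetaTail_le_one _)
        (S9.ktail_dom n α _) f
      have hsplit : ⇑((P - B k) f) =ᵐ[gaussMeasure n (p*α/2)]
          fun z => ∫ w, S9.ktail n α ((k:ℝ)+1) z w * f w ∂gaussMeasure n α := by
        have h0 : (P - B k) f = P f - B k f := rfl
        rw [h0]
        calc ⇑(P f - B k f) =ᵐ[gaussMeasure n (p*α/2)] ⇑(P f) - ⇑(B k f) :=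
            MeasureTheory.Lp.coeFn_sub _ _
          _ =ᵐ[gaussMeasure n (p*α/2)]
              fun z => ∫ w, S9.ktail n α ((k:ℝ)+1) z w * f w ∂gaussMeasure n α := by
            filter_upwards [hP f, hB k f, hcut.2.2, htail.2.2] with z hPz hBz hcz htz
            simp only [Pi.sub_apply]
            rw [hPz, hBz]
            have hfull : ∫ w, Complex.exp ((α:ℂ) * herm z w) * f w ∂gaussMeasure n α
                = (∫ w, S9.kcut n α ((k:ℝ)+1) z w * f w ∂gaussMeasure n α)
                  + ∫ w, S9.ktail n α ((k:ℝ)+1) z w * f w ∂gaussMeasure n α := by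
              rw [← integral_add hcz htz]
              apply integral_congr_ae
              apply Filter.Eventually.of_forall
              intro w
              show Complex.exp ((α:ℂ) * herm z w) * f w
                = S9.kcut n α ((k:ℝ)+1) z w * f w + S9.ktail n α ((k:ℝ)+1) z w * f w
              have h4 := S9.cut_add_tail n α ((k:ℝ)+1) z w
              rw [S9.ker] at h4
              rw [← h4]
              ring
            rw [hfull]
            ring
      have h1 : ‖(P - B k) f‖
          = (eLpNorm (fun z => ∫ w, S9.ktail n α ((k:ℝ)+1) z w * f w ∂gaussMeasure n α)
              (ENNReal.ofReal p) (gaussMeasure n (p*α/2))).toReal := by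
        rw [MeasureTheory.Lp.norm_def, eLpNorm_congr_ae hsplit]
      rw [h1, MeasureTheory.Lp.norm_def, ← ENNReal.toReal_mul]
      apply ENNReal.toReal_mono
      · exact (ENNReal.mul_lt_top (hcUp_fin k) (MeasureTheory.Lp.eLpNorm_lt_top f)).ne
      · exact htail.2.1
    have hopn : ∀ k, ‖P - B k‖ ≤ (cUp k).toReal := fun k =>
      ContinuousLinearMap.opNorm_le_bound _ ENNReal.toReal_nonneg (hkey k)
    have htend0 : Tendsto (fun k : ℕ => cUp k) atTop (nhds 0) := by
      have h1 := S9.Itail_tendsto (n := n) hα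
      have h2 := ENNReal.Tendsto.const_mul (a := ENNReal.ofReal ((α/Real.pi)^n)) h1
        (Or.inr ENNReal.ofReal_ne_top)
      rw [mul_zero] at h2
      exact h2
    have htend : Tendsto (fun k : ℕ => (cUp k).toReal) atTop (nhds 0) := by
      have := (ENNReal.tendsto_toReal (by simp : (0:ℝ≥0∞) ≠ ⊤)).comp htend0
      exact this
    exact squeeze_zero (fun k => norm_nonneg _) hopn htend
end
end
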